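/- Let n ≥ 1, L > 0, μ ≤ 0, and let f : ℝⁿ → ℝ belong to F_{μ,L} with f⋆ = inf f finite. Let x¹ ∈ ℝⁿ and suppose there exists γ ∈ [0, 1) such that every x̄ in the sublevel set X = {x : f(x) ≤ f(x¹)} satisfies f(x̄ − (1/L)∇f(x̄)) − f⋆ ≤ γ (f(x̄) − f⋆) (one-step linear contraction of gradient descent with step 1/L). Then f satisfies the PL inequality on X with constant μ_p = L²(1 − γ)/(2L − μ); that is, f(x) − f⋆ ≤ ((2L − μ)/(2L²(1 − γ)))‖∇f(x)‖² for all x ∈ X. -/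

import Mathlib

open Set
open scoped RealInnerProductSpace

/-- Subgradient inequality: a differentiable convex function lies above its tangent. -/
lemma aux_grad_ineq {E : Type*} [NormedAddCommGroup E] [InnerProductSpace ℝ E]
    {g : E → ℝ} {D : E →L[ℝ] ℝ} (hg : ConvexOn ℝ univ g) (x y : E)
    (hD : HasFDerivAt g D x) : g x + D (y - x) ≤ g y := by
  rcases eq_or_ne y x with rfl | hne
  · simp
  · set φ : ℝ → ℝ := fun t => g (t • (y - x) + x) with hφ
    have hline : ∀ t : ℝ, HasDerivAt (fun s : ℝ => s • (y - x) + x) (y - x) t := by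
      intro t
      simpa using ((hasDerivAt_id t).smul_const (y - x)).add_const x
    have hφ0 : HasDerivAt φ (D (y - x)) 0 := by
      have h := HasFDerivAt.comp_hasDerivAt 0
        (show HasFDerivAt g D ((0:ℝ) • (y - x) + x) by simpa using hD) (hline 0)
      exact h
    have hconv : ConvexOn ℝ univ φ := by
      have := hg.comp_affineMap (AffineMap.lineMap x y : ℝ →ᵃ[ℝ] E)
      have heq : (g ∘ (AffineMap.lineMap x y : ℝ →ᵃ[ℝ] E)) = φ := by
        funext t
        simp only [hφ, Function.comp_apply, AffineMap.lineMap_apply_module]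
        congr 1
        module
      rw [heq] at this
      simpa using this
    have hslope := hconv.le_slope_of_hasDerivAt (x := 0) (y := 1)
      (mem_univ _) (mem_univ _) zero_lt_one hφ0
    have h1 : φ 1 = g y := by simp [hφ]
    have h0 : φ 0 = g x := by simp [hφ]
    rw [slope_def_field, h1, h0] at hslope
    simp only [div_one, sub_zero] at hslope
    linarith [hslope]

theorem stmt_7 (n : ℕ) (hn : 1 ≤ n)
    (f : EuclideanSpace ℝ (Fin n) → ℝ)
    (f' : EuclideanSpace ℝ (Fin n) → EuclideanSpace ℝ (Fin n))
    (L μ : ℝ) (hL : 0 < L) (hμ : μ ≤ 0)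
    (hgrad : ∀ x, HasGradientAt f (f' x) x)
    (hupper : ConvexOn ℝ univ (fun x => L / 2 * ‖x‖ ^ 2 - f x))
    (hlower : ConvexOn ℝ univ (fun x => f x - μ / 2 * ‖x‖ ^ 2))
    (fstar : ℝ) (hfstar : IsGLB (range f) fstar)
    (x1 : EuclideanSpace ℝ (Fin n))
    (γ : ℝ) (hγ : γ ∈ Ico (0 : ℝ) 1)
    (hcontract : ∀ xb, f xb ≤ f x1 →
      f (xb - (1 / L) • f' xb) - fstar ≤ γ * (f xb - fstar)) :
    ∀ x, f x ≤ f x1 →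
      f x - fstar ≤ (2 * L - μ) / (2 * L ^ 2 * (1 - γ)) * ‖f' x‖ ^ 2 := by
  intro x hx
  set y := x - (1 / L) • f' x with hy
  -- lower quadratic bound: f y ≥ f x + ⟪f' x, y - x⟫ + μ/2 ‖y - x‖²
  have hDf : HasFDerivAt f (InnerProductSpace.toDual ℝ _ (f' x)) x := hgrad x
  have hDsq : HasFDerivAt (fun z : EuclideanSpace ℝ (Fin n) => μ / 2 * ‖z‖ ^ 2)
      ((μ / 2) • (2 • (innerSL ℝ x))) x := by
    exact ((hasStrictFDerivAt_norm_sq x).hasFDerivAt).const_smul (μ / 2)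
  have hDg : HasFDerivAt (fun z => f z - μ / 2 * ‖z‖ ^ 2)
      (InnerProductSpace.toDual ℝ _ (f' x) - (μ / 2) • (2 • (innerSL ℝ x))) x :=
    hDf.sub hDsq
  have key := aux_grad_ineq hlower x y hDg
  have hval : (InnerProductSpace.toDual ℝ _ (f' x) - (μ / 2) • (2 • (innerSL ℝ x))) (y - x)
      = ⟪f' x, y - x⟫ - μ * ⟪x, y - x⟫ := by
    simp [InnerProductSpace.toDual_apply_apply]
    ring
  rw [hval] at key
  have hlow : f x + ⟪f' x, y - x⟫ + μ / 2 * ‖y - x‖ ^ 2 ≤ f y := by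
    have hexp : ‖y‖ ^ 2 = ‖x‖ ^ 2 + 2 * ⟪x, y - x⟫ + ‖y - x‖ ^ 2 := by
      have := norm_add_sq_real x (y - x)
      simpa [real_inner_comm] using this
    nlinarith [key]
  have hinner : ⟪f' x, y - x⟫ = -(1 / L) * ‖f' x‖ ^ 2 := by
    have hyx : y - x = -((1 / L) • f' x) := by rw [hy]; abel
    rw [hyx, inner_neg_right, real_inner_smul_right, real_inner_self_eq_norm_sq]
    ring
  have hnorm : ‖y - x‖ ^ 2 = (1 / L) ^ 2 * ‖f' x‖ ^ 2 := by
    rw [hy]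
    simp [norm_smul, mul_pow, abs_of_pos hL]
  have hcon := hcontract x hx
  rw [← hy] at hcon
  have hglb : fstar ≤ f y := hfstar.1 (mem_range_self y)
  -- combine
  have hstep : (1 - γ) * (f x - fstar) ≤ (2 * L - μ) / (2 * L ^ 2) * ‖f' x‖ ^ 2 := by
    have h1 : f x - f y ≤ (1 / L - μ / (2 * L ^ 2)) * ‖f' x‖ ^ 2 := by
      rw [hinner, hnorm] at hlow
      have hq : (1 / L - μ / (2 * L ^ 2)) * ‖f' x‖ ^ 2
          = (1 / L) * ‖f' x‖ ^ 2 - μ / 2 * ((1 / L) ^ 2 * ‖f' x‖ ^ 2) := by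
        field_simp
      rw [hq]
      linarith [hlow]
    have heq2 : (1 / L - μ / (2 * L ^ 2)) = (2 * L - μ) / (2 * L ^ 2) := by
      field_simp
    rw [← heq2]
    nlinarith [hcon, h1]
  have hγ1 : (0 : ℝ) < 1 - γ := by
    have := hγ.2
    linarith
  have hL2 : (0:ℝ) < 2 * L ^ 2 := by positivity
  have h2 : (1 - γ) * (f x - fstar) * (2 * L ^ 2) ≤ (2 * L - μ) * ‖f' x‖ ^ 2 := by
    calc (1 - γ) * (f x - fstar) * (2 * L ^ 2)
        ≤ (2 * L - μ) / (2 * L ^ 2) * ‖f' x‖ ^ 2 * (2 * L ^ 2) :=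
          mul_le_mul_of_nonneg_right hstep hL2.le
      _ = (2 * L - μ) * ‖f' x‖ ^ 2 := by field_simp
  rw [div_mul_eq_mul_div, le_div_iff₀ (by positivity)]
  linear_combination h2
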